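/- Let X be a nonnegative random variable whose distribution function F is absolutely continuous with density f, with survival function F̄(x) = 1 − F(x) > 0 for all x ≥ 0, and hazard rate r(x) = f(x)/F̄(x). If r(x) → 0 as x → ∞, then F is heavy-tailed, i.e. E[e^{sX}] = ∞ for every s > 0. -/

import Mathlib

open MeasureTheory Filter Set

/-- If a nonnegative random variable has an absolutely continuous
distribution with density `f`, positive survival function, and hazard rate
`r(x) = f(x)/(1 - F(x))` tending to `0` at infinity, then `F` is heavy tailed:
`E[exp (s X)] = ∞` for every `s > 0`. -/
theorem heavy_tailed_of_hazard_rate_tendsto_zero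
    {Ω : Type*} [MeasurableSpace Ω] (μ : Measure Ω) [IsProbabilityMeasure μ]
    (X : Ω → ℝ) (hX : Measurable X) (hXnn : ∀ ω, 0 ≤ X ω)
    (f : ℝ → ℝ) (hf_meas : Measurable f) (hf_nn : ∀ x, 0 ≤ f x)
    (F : ℝ → ℝ) (hF : ∀ x, F x = (μ {ω | X ω ≤ x}).toReal)
    (hdens : ∀ x, F x = ∫ u in Set.Iic x, f u)
    (hsurv : ∀ x : ℝ, 0 ≤ x → 0 < 1 - F x)
    (hr : Tendsto (fun x => f x / (1 - F x)) atTop (nhds 0)) :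
    ∀ s : ℝ, 0 < s → ∫⁻ ω, ENNReal.ofReal (Real.exp (s * X ω)) ∂μ = ⊤ := by
  intro s hs
  have hμfin : ∀ x : ℝ, μ {ω | X ω ≤ x} ≠ ⊤ := fun x => (measure_lt_top μ _).ne
  have hFnonneg : ∀ x, 0 ≤ F x := fun x => by rw [hF]; exact ENNReal.toReal_nonneg
  have hFmono : Monotone F := by
    intro a b hab
    rw [hF, hF]
    exact ENNReal.toReal_mono (hμfin b) (measure_mono (fun ω h => le_trans h hab))
  -- integrability of f on every Iic x
  have hexists : ∃ n : ℕ, 0 < μ {ω | X ω ≤ (n : ℝ)} := by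
    by_contra h
    push_neg at h
    have hall : ∀ n : ℕ, μ {ω | X ω ≤ (n : ℝ)} = 0 := fun n => le_antisymm (h n) zero_le
    have hU : (⋃ n : ℕ, {ω | X ω ≤ (n : ℝ)}) = univ := by
      ext ω
      simp only [mem_iUnion, mem_setOf_eq, mem_univ, iff_true]
      obtain ⟨n, hn⟩ := exists_nat_ge (X ω)
      exact ⟨n, hn⟩
    have : μ (⋃ n : ℕ, {ω | X ω ≤ (n : ℝ)}) = 0 := measure_iUnion_null_iff.2 hall
    rw [hU, measure_univ] at this
    exact one_ne_zero this
  obtain ⟨n₀, hn₀⟩ := hexists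
  have hint : ∀ x : ℝ, IntegrableOn f (Iic x) := by
    intro x
    obtain ⟨m, hm⟩ := exists_nat_ge x
    have hFm : 0 < F (max (m : ℝ) (n₀ : ℝ)) := by
      have h1 : 0 < F (n₀ : ℝ) := by
        rw [hF]
        exact ENNReal.toReal_pos hn₀.ne' (hμfin _)
      exact lt_of_lt_of_le h1 (hFmono (le_max_right _ _))
    have hIm : IntegrableOn f (Iic (max (m : ℝ) (n₀ : ℝ))) := by
      by_contra hni
      rw [hdens] at hFm
      rw [integral_undef hni] at hFm
      exact lt_irrefl _ hFm
    exact hIm.mono_set (Iic_subset_Iic.2 (le_trans hm (le_max_left _ _)))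
  -- choose x₀ past which hazard rate is ≤ s/4
  have hq : (0:ℝ) < s / 4 := by positivity
  have hev : ∀ᶠ x in atTop, f x / (1 - F x) < s / 4 :=
    hr.eventually (gt_mem_nhds hq)
  obtain ⟨x₀', hx₀'⟩ := eventually_atTop.1 hev
  set x₀ : ℝ := max x₀' 0 with hx₀def
  have hx₀nn : (0:ℝ) ≤ x₀ := le_max_right _ _
  have hrbound : ∀ x, x₀ ≤ x → f x ≤ s / 4 * (1 - F x) := by
    intro x hx
    have hpos : 0 < 1 - F x := hsurv x (le_trans hx₀nn hx)
    have := le_of_lt (hx₀' x (le_trans (le_max_left _ _) hx))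
    calc f x = f x / (1 - F x) * (1 - F x) := by field_simp
      _ ≤ s / 4 * (1 - F x) := by
          exact mul_le_mul_of_nonneg_right this hpos.le
  -- the halving step
  have hstep : ∀ a : ℝ, x₀ ≤ a → (1 - F a) / 2 ≤ 1 - F (a + 2 / s) := by
    intro a ha
    set b : ℝ := a + 2 / s with hbdef
    have hab : a ≤ b := by
      rw [hbdef]
      have : (0:ℝ) < 2 / s := by positivity
      linarith
    have hsplit : F b = F a + ∫ u in Ioc a b, f u := by
      rw [hdens b, hdens a, ← setIntegral_union (Iic_disjoint_Ioc le_rfl)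
        measurableSet_Ioc (hint a) ((hint b).mono_set Ioc_subset_Iic_self),
        Iic_union_Ioc_eq_Iic hab]
    have hanon : 0 ≤ a := le_trans hx₀nn ha
    have hIab : ∫ u in Ioc a b, f u ≤ s / 4 * (1 - F a) * (b - a) := by
      have hc : ∀ u ∈ Ioc a b, f u ≤ s / 4 * (1 - F a) := by
        intro u hu
        calc f u ≤ s / 4 * (1 - F u) := hrbound u (le_trans ha hu.1.le)
          _ ≤ s / 4 * (1 - F a) := by
              have := hFmono hu.1.le
              nlinarith
      calc ∫ u in Ioc a b, f u ≤ ∫ _u in Ioc a b, s / 4 * (1 - F a) :=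
            setIntegral_mono_on ((hint b).mono_set Ioc_subset_Iic_self)
              (integrableOn_const (by rw [Real.volume_Ioc]; exact ENNReal.ofReal_ne_top))
              measurableSet_Ioc hc
        _ = s / 4 * (1 - F a) * (b - a) := by
            rw [setIntegral_const, measureReal_def, Real.volume_Ioc, ENNReal.toReal_ofReal (by linarith),
              smul_eq_mul]
            ring
    have hba : b - a = 2 / s := by rw [hbdef]; ring
    have hsne : s ≠ 0 := hs.ne'
    have hkey : s / 4 * (1 - F a) * (b - a) = (1 - F a) / 2 := by
      rw [hba]; field_simp; ring
    rw [hkey] at hIab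
    linarith [hsplit, hIab]
  -- iterate
  have hiter : ∀ n : ℕ, (1 - F x₀) / 2 ^ n ≤ 1 - F (x₀ + n * (2 / s)) := by
    intro n
    induction n with
    | zero => simp
    | succ n ih =>
      have ha : x₀ ≤ x₀ + n * (2 / s) := by
        have : (0:ℝ) ≤ n * (2 / s) := by positivity
        linarith
      have h1 := hstep (x₀ + n * (2 / s)) ha
      have h2 : x₀ + (n+1 : ℕ) * (2 / s) = x₀ + n * (2 / s) + 2 / s := by
        push_cast; ring
      rw [h2]
      calc (1 - F x₀) / 2 ^ (n+1) = ((1 - F x₀) / 2 ^ n) / 2 := by ring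
        _ ≤ (1 - F (x₀ + n * (2 / s))) / 2 := by linarith
        _ ≤ _ := h1
  -- lower bound for the integral by e^{sx} (1 - F x)
  set I := ∫⁻ ω, ENNReal.ofReal (Real.exp (s * X ω)) ∂μ with hIdef
  have hlow : ∀ x : ℝ, ENNReal.ofReal (Real.exp (s * x) * (1 - F x)) ≤ I := by
    intro x
    set A : Set Ω := {ω | x < X ω} with hAdef
    have hAm : MeasurableSet A := measurableSet_lt measurable_const hX
    have hAc : A = {ω | X ω ≤ x}ᶜ := by
      ext ω; simp [hAdef, not_le]
    have hμA : μ A = 1 - ENNReal.ofReal (F x) := by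
      have hms : MeasurableSet {ω | X ω ≤ x} := hX measurableSet_Iic
      rw [hAc, measure_compl hms (hμfin x), measure_univ,
        hF x, ENNReal.ofReal_toReal (hμfin x)]
    have hμA' : ENNReal.ofReal (1 - F x) ≤ μ A := by
      rw [hμA, ENNReal.ofReal_sub 1 (hFnonneg x), ENNReal.ofReal_one]
    have h1 : ENNReal.ofReal (Real.exp (s * x)) * μ A
        ≤ ∫⁻ ω in A, ENNReal.ofReal (Real.exp (s * X ω)) ∂μ := by
      rw [← setLIntegral_const A (ENNReal.ofReal (Real.exp (s * x)))]
      apply setLIntegral_mono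
      · exact (hX.const_mul s).exp.ennreal_ofReal
      · intro ω hω
        exact ENNReal.ofReal_le_ofReal
          (Real.exp_le_exp.2 (mul_le_mul_of_nonneg_left (le_of_lt hω) hs.le))
    calc ENNReal.ofReal (Real.exp (s * x) * (1 - F x))
        = ENNReal.ofReal (Real.exp (s * x)) * ENNReal.ofReal (1 - F x) :=
          ENNReal.ofReal_mul (Real.exp_nonneg _)
      _ ≤ ENNReal.ofReal (Real.exp (s * x)) * μ A := by
          exact mul_le_mul_right hμA' _
      _ ≤ ∫⁻ ω in A, ENNReal.ofReal (Real.exp (s * X ω)) ∂μ := h1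
      _ ≤ I := setLIntegral_le_lintegral _ _
  -- unboundedness
  have hc : 0 < Real.exp (s * x₀) * (1 - F x₀) :=
    mul_pos (Real.exp_pos _) (hsurv x₀ hx₀nn)
  have hMle : ∀ M : ℝ, ENNReal.ofReal M ≤ I := by
    intro M
    have hrgt1 : (1:ℝ) < Real.exp 2 / 2 := by
      have : (3:ℝ) ≤ Real.exp 2 := by
        have := Real.add_one_le_exp (2:ℝ)
        linarith
      linarith
    have htend : Tendsto (fun n : ℕ =>
        Real.exp (s * x₀) * (1 - F x₀) * (Real.exp 2 / 2) ^ n) atTop atTop :=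
      (tendsto_pow_atTop_atTop_of_one_lt hrgt1).const_mul_atTop hc
    obtain ⟨n, hn⟩ := (htend.eventually_ge_atTop M).exists
    set x : ℝ := x₀ + n * (2 / s) with hxdef
    have hexp : Real.exp (s * x) = Real.exp (s * x₀) * Real.exp 2 ^ n := by
      have hsx : s * x = s * x₀ + n * 2 := by
        rw [hxdef]; field_simp
      rw [hsx, Real.exp_add, Real.exp_nat_mul]
    have hkey : M ≤ Real.exp (s * x) * (1 - F x) := by
      have h1 := hiter n
      have h2 : Real.exp (s * x₀) * (1 - F x₀) * (Real.exp 2 / 2) ^ n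
          = Real.exp (s * x) * ((1 - F x₀) / 2 ^ n) := by
        rw [hexp, div_pow]; ring
      calc M ≤ Real.exp (s * x₀) * (1 - F x₀) * (Real.exp 2 / 2) ^ n := hn
        _ = Real.exp (s * x) * ((1 - F x₀) / 2 ^ n) := h2
        _ ≤ Real.exp (s * x) * (1 - F x) :=
            mul_le_mul_of_nonneg_left h1 (Real.exp_nonneg _)
    exact le_trans (ENNReal.ofReal_le_ofReal hkey) (hlow x)
  by_contra hne
  have h1 := hMle (I.toReal + 1)
  have h2 : I < ENNReal.ofReal (I.toReal + 1) := by
    rw [← ENNReal.ofReal_toReal hne]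
    exact (ENNReal.ofReal_lt_ofReal_iff (by positivity)).2 (by
      rw [ENNReal.toReal_ofReal ENNReal.toReal_nonneg]; linarith)
  exact absurd h1 h2.not_ge
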